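/- Let W, m, M̃ be d×d Hermitian matrices with W positive definite, M̃ ≥ 0, and 0 ≤ m ≤ W. Define B(f, F, W, M) = 4(F − ⟨(W+M)⁻¹f, f⟩) for M = M̃ + m and B̃(f, F, W, M̃) analogously. Then for every f ∈ ℂᵈ and F ∈ ℝ: B(f,F,W,M̃+m) − B̃(f,F,W,M̃) ≥ 2⟨(W+M̃)⁻¹ m (W+M̃)⁻¹ f, f⟩. -/

import Mathlib

open scoped ComplexOrder Matrix

open Matrix

open scoped MatrixOrder in
noncomputable def Matrix.PosSemidef.sqrt {d : ℕ} {E : Matrix (Fin d) (Fin d) ℂ}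
    (_hE : E.PosSemidef) : Matrix (Fin d) (Fin d) ℂ := CFC.sqrt E

open scoped MatrixOrder in
lemma Matrix.PosSemidef.posSemidef_sqrt {d : ℕ} {E : Matrix (Fin d) (Fin d) ℂ}
    (hE : E.PosSemidef) : hE.sqrt.PosSemidef := (CFC.sqrt_nonneg E).posSemidef

open scoped MatrixOrder in
lemma Matrix.PosSemidef.sqrt_mul_self {d : ℕ} {E : Matrix (Fin d) (Fin d) ℂ}
    (hE : E.PosSemidef) : hE.sqrt * hE.sqrt = E := CFC.sqrt_mul_sqrt_self E hE.nonneg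

lemma aux_sq_le {d : ℕ} {E : Matrix (Fin d) (Fin d) ℂ} (hE : E.PosSemidef)
    (hE1 : (1 - E).PosSemidef) : (E - E * E).PosSemidef := by
  have hS := hE.posSemidef_sqrt
  have hSS : hE.sqrt * hE.sqrt = E := hE.sqrt_mul_self
  have h := hE1.conjTranspose_mul_mul_same hE.sqrt
  rw [hS.isHermitian.eq] at h
  have hmid : hE.sqrt * E * hE.sqrt = E * E := by
    calc hE.sqrt * E * hE.sqrt = hE.sqrt * (hE.sqrt * hE.sqrt) * hE.sqrt := by rw [hSS]
      _ = (hE.sqrt * hE.sqrt) * (hE.sqrt * hE.sqrt) := by noncomm_ring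
      _ = E * E := by rw [hSS]
  have heq : hE.sqrt * (1 - E) * hE.sqrt = E - E * E := by
    rw [Matrix.mul_sub, Matrix.mul_one, Matrix.sub_mul, hSS, hmid]
  rwa [heq] at h

lemma aux_cancel {d : ℕ} {P N : Matrix (Fin d) (Fin d) ℂ} (hP : P.PosDef)
    (hN : N.PosSemidef) (hPN : (P - N).PosSemidef) :
    (N - N * P⁻¹ * N).PosSemidef := by
  obtain ⟨S, hS, hSS⟩ : ∃ S : Matrix (Fin d) (Fin d) ℂ, S.PosSemidef ∧ S * S = P :=
    ⟨hP.posSemidef.sqrt, hP.posSemidef.posSemidef_sqrt, hP.posSemidef.sqrt_mul_self⟩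
  have hdet : IsUnit S.det := by
    have hd : S.det * S.det = P.det := by rw [← det_mul, hSS]
    have hne : P.det ≠ 0 := hP.det_pos.ne'
    refine isUnit_iff_ne_zero.mpr fun h => hne ?_
    rw [← hd, h, mul_zero]
  have hSinv : S⁻¹ * S = 1 := nonsing_inv_mul S hdet
  have hSinv' : S * S⁻¹ = 1 := mul_nonsing_inv S hdet
  have hSherm : Sᴴ = S := hS.isHermitian.eq
  have hSinvherm : (S⁻¹)ᴴ = S⁻¹ := by rw [conjTranspose_nonsing_inv, hSherm]
  have hE : (S⁻¹ * N * S⁻¹).PosSemidef := by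
    have := hN.conjTranspose_mul_mul_same S⁻¹
    rwa [hSinvherm] at this
  have c1 : ∀ X : Matrix (Fin d) (Fin d) ℂ, S * (S⁻¹ * X) = X := fun X => by
    rw [← Matrix.mul_assoc, hSinv', Matrix.one_mul]
  have c2 : ∀ X : Matrix (Fin d) (Fin d) ℂ, S⁻¹ * (S * X) = X := fun X => by
    rw [← Matrix.mul_assoc, hSinv, Matrix.one_mul]
  have hE1 : (1 - S⁻¹ * N * S⁻¹).PosSemidef := by
    have h := hPN.conjTranspose_mul_mul_same S⁻¹
    rw [hSinvherm] at h
    have heq : S⁻¹ * (P - N) * S⁻¹ = 1 - S⁻¹ * N * S⁻¹ := by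
      rw [Matrix.mul_sub, Matrix.sub_mul]
      congr 1
      rw [← hSS, Matrix.mul_assoc, Matrix.mul_assoc, c2, hSinv']
    rwa [heq] at h
  have h := (aux_sq_le hE hE1).conjTranspose_mul_mul_same S
  rw [hSherm] at h
  have heq : S * (S⁻¹ * N * S⁻¹ - S⁻¹ * N * S⁻¹ * (S⁻¹ * N * S⁻¹)) * S
      = N - N * P⁻¹ * N := by
    have hPinv : P⁻¹ = S⁻¹ * S⁻¹ := by rw [← hSS, Matrix.mul_inv_rev]
    rw [hPinv, Matrix.mul_sub, Matrix.sub_mul]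
    congr 1 <;> simp only [Matrix.mul_assoc, hSinv, Matrix.mul_one, c1]
  rwa [heq] at h


theorem stmt_19 {d : ℕ} (W m M : Matrix (Fin d) (Fin d) ℂ)
    (hW : W.PosDef) (hM : M.PosSemidef) (hm : m.PosSemidef)
    (hmW : (W - m).PosSemidef)
    (B : (Fin d → ℂ) → ℝ → Matrix (Fin d) (Fin d) ℂ → Matrix (Fin d) (Fin d) ℂ → ℝ)
    (hB : ∀ f F W' M', B f F W' M' = 4 * (F - (star f ⬝ᵥ (W' + M')⁻¹ *ᵥ f).re)) :
    ∀ (f : Fin d → ℂ) (F : ℝ),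
      2 * (star f ⬝ᵥ ((W + M)⁻¹ * m * (W + M)⁻¹) *ᵥ f).re ≤
        B f F W (M + m) - B f F W M := by
  intro f F
  obtain ⟨A, hAdef⟩ : ∃ A : Matrix (Fin d) (Fin d) ℂ, A = W + M := ⟨W + M, rfl⟩
  rw [← hAdef]
  have hA : A.PosDef := hAdef ▸ hW.add_posSemidef hM
  have hAm : (A + m).PosDef := hA.add_posSemidef hm
  have hAmm : (A - m).PosSemidef := by
    have h : A - m = (W - m) + M := by rw [hAdef]; abel
    rw [h]; exact hmW.add hM
  have hAdet : IsUnit A.det := isUnit_iff_ne_zero.mpr hA.det_pos.ne'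
  have hAmdet : IsUnit (A + m).det := isUnit_iff_ne_zero.mpr hAm.det_pos.ne'
  have cA1 : ∀ X : Matrix (Fin d) (Fin d) ℂ, A * (A⁻¹ * X) = X := fun X => by
    rw [← Matrix.mul_assoc, mul_nonsing_inv A hAdet, Matrix.one_mul]
  have cA2 : ∀ X : Matrix (Fin d) (Fin d) ℂ, A⁻¹ * (A * X) = X := fun X => by
    rw [← Matrix.mul_assoc, nonsing_inv_mul A hAdet, Matrix.one_mul]
  have cB1 : ∀ X : Matrix (Fin d) (Fin d) ℂ, (A + m) * ((A + m)⁻¹ * X) = X := fun X => by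
    rw [← Matrix.mul_assoc, mul_nonsing_inv _ hAmdet, Matrix.one_mul]
  have cB2 : ∀ X : Matrix (Fin d) (Fin d) ℂ, (A + m)⁻¹ * ((A + m) * X) = X := fun X => by
    rw [← Matrix.mul_assoc, nonsing_inv_mul _ hAmdet, Matrix.one_mul]
  have h1 : (m - m * A⁻¹ * m).PosSemidef := aux_cancel hA hm hAmm
  have h2 : (m * A⁻¹ * (A - m) * (A⁻¹ * m)).PosSemidef := by
    have h := hAmm.conjTranspose_mul_mul_same (A⁻¹ * m)
    rwa [conjTranspose_mul, hm.isHermitian.eq, conjTranspose_nonsing_inv, hA.isHermitian.eq] at h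
  have h3 : (m - m * A⁻¹ * m * A⁻¹ * m).PosSemidef := by
    have key : m * A⁻¹ * (A - m) * (A⁻¹ * m)
        = m * A⁻¹ * m - m * A⁻¹ * m * A⁻¹ * m := by
      rw [Matrix.mul_sub, Matrix.sub_mul]
      congr 1
      · rw [Matrix.mul_assoc (m * A⁻¹) A _, cA1]
      · simp only [Matrix.mul_assoc]
    have heq : m - m * A⁻¹ * m * A⁻¹ * m
        = (m - m * A⁻¹ * m) + m * A⁻¹ * (A - m) * (A⁻¹ * m) := by
      rw [key]; abel
    rw [heq]; exact h1.add h2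
  have hD : ((2:ℂ) • A⁻¹ - (2:ℂ) • (A + m)⁻¹ - A⁻¹ * m * A⁻¹).PosSemidef := by
    have h := h3.conjTranspose_mul_mul_same (A + m)⁻¹
    rw [hAm.isHermitian.inv.eq] at h
    have hc : (A + m) * ((2:ℂ) • A⁻¹ - (2:ℂ) • (A + m)⁻¹ - A⁻¹ * m * A⁻¹) * (A + m)
        = m - m * A⁻¹ * m * A⁻¹ * m := by
      simp only [Matrix.mul_sub, Matrix.sub_mul, Matrix.mul_add, Matrix.add_mul,
        Matrix.mul_smul, Matrix.smul_mul, Matrix.mul_assoc, cA1, cA2, cB1, cB2,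
        mul_nonsing_inv A hAdet, nonsing_inv_mul A hAdet,
        mul_nonsing_inv _ hAmdet, nonsing_inv_mul _ hAmdet,
        Matrix.mul_one, Matrix.one_mul, smul_smul]
      module
    have heq : (A + m)⁻¹ * (m - m * A⁻¹ * m * A⁻¹ * m) * (A + m)⁻¹
        = (2:ℂ) • A⁻¹ - (2:ℂ) • (A + m)⁻¹ - A⁻¹ * m * A⁻¹ := by
      rw [← hc, Matrix.mul_assoc ((A+m)⁻¹), Matrix.mul_assoc _ _ ((A+m)⁻¹),
        mul_nonsing_inv _ hAmdet, Matrix.mul_one, cB2]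
    rwa [heq] at h
  have hre := hD.re_dotProduct_nonneg f
  have hsplit : (star f ⬝ᵥ ((2:ℂ) • A⁻¹ - (2:ℂ) • (A + m)⁻¹ - A⁻¹ * m * A⁻¹) *ᵥ f)
      = (2:ℂ) * (star f ⬝ᵥ A⁻¹ *ᵥ f) - (2:ℂ) * (star f ⬝ᵥ (A + m)⁻¹ *ᵥ f)
        - (star f ⬝ᵥ (A⁻¹ * m * A⁻¹) *ᵥ f) := by
    simp [Matrix.sub_mulVec, Matrix.smul_mulVec, dotProduct_sub, dotProduct_smul,
      smul_eq_mul]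
  rw [hsplit] at hre
  rw [hB, hB]
  have hadd : W + (M + m) = A + m := by rw [hAdef]; abel
  have hadd2 : W + M = A := hAdef.symm
  rw [hadd, hadd2]
  simp only [RCLike.re_to_complex, Complex.sub_re, Complex.mul_re, Complex.re_ofNat,
    Complex.im_ofNat, zero_mul, sub_zero] at hre ⊢
  linarith
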